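/- Let R be an algebraic curvature tensor on ℝ⁴ that is Einstein with ρ = (τ/4)·Id, and suppose an orthonormal basis satisfies the Chern conditions R_{1213} = R_{1214} = R_{1223} = R_{1224} = R_{1314} = R_{1323} = 0. Then additionally R_{1224} = R_{1334} = R_{2334} = R_{1424} = R_{1434} = R_{2434} = 0 and R_{1212} = R_{3434}, R_{1313} = R_{2424}, R_{1414} = R_{2323}; i.e., the basis is a Singer–Thorpe basis. -/
import Mathlib


/-- Ricci tensor of an algebraic curvature tensor, `ρ i j = ∑ a, R a i j a`
(sign convention so that ρ is the usual Ricci contraction). -/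
def Ric {n : ℕ} (R : Fin n → Fin n → Fin n → Fin n → ℝ) (i j : Fin n) : ℝ :=
  ∑ a, R a i j a

/-- Scalar curvature `τ = ∑ i, ρ i i`. -/
def scalCurv {n : ℕ} (R : Fin n → Fin n → Fin n → Fin n → ℝ) : ℝ :=
  ∑ i, Ric R i i

/-- Squared norm of the curvature tensor, `|R|² = ∑ R_{ijkl}²`. -/
def normR2 {n : ℕ} (R : Fin n → Fin n → Fin n → Fin n → ℝ) : ℝ :=
  ∑ i, ∑ j, ∑ k, ∑ l, (R i j k l) ^ 2

/-- Squared norm of the Ricci tensor, `|ρ|² = ∑ ρ_{ij}²`. -/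
def normRic2 {n : ℕ} (R : Fin n → Fin n → Fin n → Fin n → ℝ) : ℝ :=
  ∑ i, ∑ j, (Ric R i j) ^ 2

/-- `R` is an algebraic curvature tensor: antisymmetry in the first and last pairs,
pair-interchange symmetry, and the first Bianchi identity. -/
def IsACT {n : ℕ} (R : Fin n → Fin n → Fin n → Fin n → ℝ) : Prop :=
  (∀ i j k l, R i j k l = - R j i k l) ∧
  (∀ i j k l, R i j k l = - R i j l k) ∧
  (∀ i j k l, R i j k l = R k l i j) ∧
  (∀ i j k l, R i j k l + R j k i l + R k i j l = 0)

/-- Kronecker delta. -/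
def kron {n : ℕ} (i j : Fin n) : ℝ := if i = j then 1 else 0

theorem einstein_chern_is_singer_thorpe (R : Fin 4 → Fin 4 → Fin 4 → Fin 4 → ℝ) (hR : IsACT R)
    (hE : ∀ i j, Ric R i j = scalCurv R / 4 * kron i j)
    (hC1 : R 0 1 0 2 = 0) (hC2 : R 0 1 0 3 = 0) (hC3 : R 0 1 1 2 = 0)
    (hC4 : R 0 1 1 3 = 0) (hC5 : R 0 2 0 3 = 0) (hC6 : R 0 2 1 2 = 0) :
    R 0 1 1 3 = 0 ∧ R 0 2 2 3 = 0 ∧ R 1 2 2 3 = 0 ∧ R 0 3 1 3 = 0 ∧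
    R 0 3 2 3 = 0 ∧ R 1 3 2 3 = 0 ∧
    R 0 1 0 1 = R 2 3 2 3 ∧ R 0 2 0 2 = R 1 3 1 3 ∧ R 0 3 0 3 = R 1 2 1 2 := by
  obtain ⟨ha, hb, hc, hd⟩ := hR
  have h01 := hE 0 1
  have h02 := hE 0 2
  have h03 := hE 0 3
  have h12 := hE 1 2
  have h13 := hE 1 3
  have h00 := hE 0 0
  have h11 := hE 1 1
  have h22 := hE 2 2
  have h33 := hE 3 3
  simp [Ric, kron, Fin.sum_univ_four] at h01 h02 h03 h12 h13 h00 h11 h22 h33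
  refine ⟨hC4, ?_, ?_, ?_, ?_, ?_, ?_, ?_, ?_⟩
  · -- R 0 2 2 3 = 0 from h03
    linarith [ha 0 0 3 0, hb 3 0 3 3, ha 1 0 3 1, hb 0 1 3 1, ha 2 0 3 2, hb 0 2 3 2, h03]
  · -- R 1 2 2 3 = 0 from h13
    linarith [ha 1 1 3 1, hb 3 1 3 3, hb 0 1 3 0, ha 2 1 3 2, hb 1 2 3 2, hC2, h13]
  · -- R 0 3 1 3 = 0 from h01
    linarith [ha 0 0 1 0, hb 1 0 1 1, ha 2 0 1 2, hc 2 0 1 2, hc 0 2 1 2, ha 3 0 1 3, hc 3 0 1 3, hc 0 3 1 3, hC6, h01]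
  · -- R 0 3 2 3 = 0 from h02
    linarith [ha 0 0 2 0, hb 2 0 2 2, ha 1 0 2 1, hb 0 1 2 1, ha 3 0 2 3, hb 0 3 2 3, hC3, h02]
  · -- R 1 3 2 3 = 0 from h12
    linarith [ha 1 1 2 1, hb 2 1 2 2, hb 0 1 2 0, ha 3 1 2 3, hC1, h12]
  all_goals
    linarith [h00, h11, h22, h33,
      ha 0 0 0 0, ha 1 1 1 1, ha 2 2 2 2, ha 3 3 3 3,
      ha 1 0 0 1, ha 2 0 0 2, ha 3 0 0 3,
      hb 0 1 1 0, ha 2 1 1 2, ha 3 1 1 3,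
      hb 0 2 2 0, hb 1 2 2 1, ha 3 2 2 3,
      hb 0 3 3 0, hb 1 3 3 1, hb 2 3 3 2,
      hb 0 1 1 0, hb 0 2 2 0, hb 0 3 3 0, hb 1 2 2 1, hb 1 3 3 1, hb 2 3 3 2,
      ha 1 2 1 2, hb 2 1 1 2, ha 1 3 1 3, hb 3 1 1 3, ha 2 3 2 3, hb 3 2 2 3,
      hc 1 2 2 1, hc 1 3 3 1, hc 2 3 3 2]
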